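/- Let d > 0, q > 0 and C > 0 be reals, and let n > 1 be a real number with log n ≥ C. Set γ = (n/log n)^{−d/(2q+2d)}. Then γ^{−2q/d} · log(C/γ) ≤ n γ². -/
import Mathlib


noncomputable section

/-- With `γ = (n/log n)^{-d/(2q+2d)}` and `log n ≥ C`, one has
`γ^{-2q/d} log(C/γ) ≤ n γ²`. -/
theorem stmt16 (d q C n : ℝ) (hd : 0 < d) (hq : 0 < q) (hC : 0 < C)
    (hn : 1 < n) (hlog : C ≤ Real.log n) :
    ((n / Real.log n) ^ (-(d / (2 * q + 2 * d)))) ^ (-(2 * q / d)) *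
        Real.log (C / (n / Real.log n) ^ (-(d / (2 * q + 2 * d))))
      ≤ n * ((n / Real.log n) ^ (-(d / (2 * q + 2 * d)))) ^ (2 : ℝ) := by
  have hL : 0 < Real.log n := lt_of_lt_of_le hC hlog
  have hLn : Real.log n < n := (Real.log_le_sub_one_of_pos (by linarith)).trans_lt (by linarith)
  set L := Real.log n with hLdef
  set t := n / L with htdef
  have ht1 : 1 < t := (one_lt_div hL).mpr hLn
  have ht0 : 0 < t := by linarith
  have hsum : 0 < 2 * q + 2 * d := by linarith
  set α := d / (2 * q + 2 * d) with hα
  have hα0 : 0 < α := div_pos hd hsum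
  have hα2 : α ≤ 1 / 2 := by
    rw [hα, div_le_div_iff₀ hsum (by norm_num)]; linarith
  have e1 : (t ^ (-α)) ^ (-(2 * q / d)) = t ^ (1 - 2 * α) := by
    rw [← Real.rpow_mul ht0.le]
    congr 1
    rw [hα]
    field_simp
    ring
  have e2 : (t ^ (-α)) ^ (2 : ℝ) = t ^ (-(2 * α)) := by
    rw [← Real.rpow_mul ht0.le]
    ring_nf
  have e3 : Real.log (C / t ^ (-α)) = Real.log C + α * Real.log t := by
    rw [Real.log_div hC.ne' (Real.rpow_pos_of_pos ht0 _).ne', Real.log_rpow ht0]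
    ring
  have e4 : n * t ^ (-(2 * α)) = t ^ (1 - 2 * α) * L := by
    have hn' : n = t * L := (div_mul_cancel₀ n hL.ne').symm
    rw [hn', sub_eq_add_neg, Real.rpow_add ht0, Real.rpow_one]
    ring
  rw [e1, e2, e3, e4]
  have hpow : (0 : ℝ) < t ^ (1 - 2 * α) := Real.rpow_pos_of_pos ht0 _
  apply mul_le_mul_of_nonneg_left _ hpow.le
  -- remains: log C + α * log t ≤ L
  have hlt : Real.log t = L - Real.log L := by
    rw [htdef, Real.log_div (by linarith) hL.ne']
  have hlt0 : 0 ≤ Real.log t := Real.log_nonneg ht1.le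
  have h1 : Real.log C ≤ Real.log L := Real.log_le_log hC hlog
  have h2 : α * Real.log t ≤ (1 / 2) * Real.log t :=
    mul_le_mul_of_nonneg_right hα2 hlt0
  have h3 : Real.log L ≤ L := (Real.log_le_sub_one_of_pos hL).trans (by linarith)
  nlinarith [hlt, h1, h2, h3]
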